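/- Fix κ ≥ 1. For each J ≥ κ let p*_J ∈ (0,1) be defined by the equation ∑_{k=κ}^{J} C(J,k)·(p*_J)^k = α, where α ∈ (0,1) is a constant and C(J,k) denotes the binomial coefficient. Then p*_J ≍ 1/J as J → ∞; that is, there exist constants 0 < c₁ ≤ c₂ < ∞ and J₀ such that c₁/J ≤ p*_J ≤ c₂/J for all J ≥ J₀. -/

import Mathlib

open Finset

/-- If `p*_J ∈ (0,1)` solves `∑_{k=κ}^{J} C(J,k) (p*_J)^k = α` with `α ∈ (0,1)` fixed,
then `p*_J ≍ 1/J` as `J → ∞`. -/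
theorem pstar_asymp_one_over_J (κ : ℕ) (hκ : 1 ≤ κ) (α : ℝ) (hα0 : 0 < α) (hα1 : α < 1)
    (p : ℕ → ℝ)
    (hp : ∀ J, κ ≤ J → 0 < p J ∧ p J < 1)
    (heq : ∀ J, κ ≤ J → ∑ k ∈ Finset.Icc κ J, (J.choose k : ℝ) * p J ^ k = α) :
    ∃ c₁ c₂ : ℝ, 0 < c₁ ∧ c₁ ≤ c₂ ∧ ∃ J₀ : ℕ,
      ∀ J, J₀ ≤ J → c₁ / J ≤ p J ∧ p J ≤ c₂ / J := by
  set c₁ := Real.log (1 + α) with hc₁def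
  have hc₁pos : 0 < c₁ := Real.log_pos (by linarith)
  set c₂' := 2 * (α * (Nat.factorial κ : ℝ)) ^ ((κ : ℝ)⁻¹) with hc₂'def
  have hακ : 0 < α * (Nat.factorial κ : ℝ) := by positivity
  have hc₂'pos : 0 < c₂' := by positivity
  refine ⟨c₁, max c₁ c₂', hc₁pos, le_max_left _ _, 2 * κ, fun J hJ => ?_⟩
  have hκJ : κ ≤ J := le_trans (by omega) hJ
  obtain ⟨hp0, hp1⟩ := hp J hκJ
  have hJpos : 0 < J := by omega
  have hJR : (0 : ℝ) < J := by exact_mod_cast hJpos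
  have hsum := heq J hκJ
  constructor
  · -- lower bound
    have hsub : Finset.Icc κ J ⊆ Finset.Ioc 0 J := by
      intro k hk
      simp only [mem_Icc, mem_Ioc] at *
      omega
    have h1 : α ≤ ∑ k ∈ Finset.Ioc 0 J, (J.choose k : ℝ) * p J ^ k := by
      rw [← hsum]
      apply Finset.sum_le_sum_of_subset_of_nonneg hsub
      intro k _ _; positivity
    have hbinom : ∑ k ∈ Finset.range (J + 1), (J.choose k : ℝ) * p J ^ k = (1 + p J) ^ J := by
      rw [show (1 : ℝ) + p J = p J + 1 by ring, add_pow]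
      refine Finset.sum_congr rfl fun k _ => ?_
      rw [one_pow]; ring
    have h2 : ∑ k ∈ Finset.Ioc 0 J, (J.choose k : ℝ) * p J ^ k
        = (1 + p J) ^ J - 1 := by
      have hins : Finset.range (J + 1) = insert 0 (Finset.Ioc 0 J) := by
        ext k; simp only [Finset.mem_range, Finset.mem_insert, Finset.mem_Ioc, Nat.lt_succ_iff]; omega
      rw [hins, Finset.sum_insert (by simp)] at hbinom
      simp at hbinom
      linarith
    have h3 : 1 + α ≤ (1 + p J) ^ J := by rw [h2] at h1; linarith
    have h4 : (1 + p J) ^ J ≤ Real.exp (p J * J) := by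
      calc (1 + p J) ^ J ≤ Real.exp (p J) ^ J := by
            apply pow_le_pow_left₀ (by linarith)
            linarith [Real.add_one_le_exp (p J)]
        _ = Real.exp (p J * J) := by
            rw [← Real.exp_nat_mul]; ring_nf
    have h5 : c₁ ≤ p J * J := by
      have := Real.log_le_log (by linarith) (le_trans h3 h4)
      rwa [Real.log_exp] at this
    rw [div_le_iff₀ hJR]
    linarith
  · -- upper bound
    have hterm : (J.choose κ : ℝ) * p J ^ κ ≤ α := by
      rw [← hsum]
      apply Finset.single_le_sum (f := fun k => (J.choose k : ℝ) * p J ^ k)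
      · intro k _; positivity
      · simp [hκJ]
    have hdesc : ((J : ℝ) / 2) ^ κ ≤ (Nat.factorial κ : ℝ) * (J.choose κ : ℝ) := by
      have h1 : (J + 1 - κ) ^ κ ≤ J.descFactorial κ := Nat.pow_sub_le_descFactorial J κ
      have h2 : J.descFactorial κ = κ.factorial * J.choose κ :=
        Nat.descFactorial_eq_factorial_mul_choose J κ
      have h3 : ((J + 1 - κ : ℕ) : ℝ) ^ κ ≤ (Nat.factorial κ : ℝ) * (J.choose κ : ℝ) := by
        rw [h2] at h1
        exact_mod_cast h1
      refine le_trans (pow_le_pow_left₀ (by positivity) ?_ κ) h3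
      have : ((J + 1 - κ : ℕ) : ℝ) = (J : ℝ) + 1 - κ := by
        push_cast [Nat.cast_sub (by omega : κ ≤ J + 1)]
        ring
      rw [this]
      have hκR : 2 * (κ : ℝ) ≤ (J : ℝ) := by exact_mod_cast hJ
      linarith
    have hXpow : (p J * (J : ℝ) / 2) ^ κ ≤ α * (Nat.factorial κ : ℝ) := by
      have : (p J * (J : ℝ) / 2) ^ κ = ((J : ℝ) / 2) ^ κ * p J ^ κ := by
        rw [← mul_pow]; ring_nf
      rw [this]
      calc ((J : ℝ) / 2) ^ κ * p J ^ κ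
          ≤ ((Nat.factorial κ : ℝ) * (J.choose κ : ℝ)) * p J ^ κ := by
            apply mul_le_mul_of_nonneg_right hdesc (by positivity)
        _ = (Nat.factorial κ : ℝ) * ((J.choose κ : ℝ) * p J ^ κ) := by ring
        _ ≤ (Nat.factorial κ : ℝ) * α := by
            apply mul_le_mul_of_nonneg_left hterm (by positivity)
        _ = α * (Nat.factorial κ : ℝ) := by ring
    have hY : ((α * (Nat.factorial κ : ℝ)) ^ ((κ : ℝ)⁻¹)) ^ κ = α * (Nat.factorial κ : ℝ) :=
      Real.rpow_inv_natCast_pow (le_of_lt hακ) (by omega)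
    have hX : p J * (J : ℝ) / 2 ≤ (α * (Nat.factorial κ : ℝ)) ^ ((κ : ℝ)⁻¹) := by
      have h := hXpow
      rw [← hY] at h
      exact le_of_pow_le_pow_left₀ (by omega) (by positivity) h
    have hfinal : p J ≤ c₂' / J := by
      rw [le_div_iff₀ hJR, hc₂'def]
      nlinarith
    refine le_trans hfinal ?_
    gcongr
    exact le_max_right _ _
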